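/- Let Θ ∈ ℝ^{ℓ×n} and u₁,…,u_m ∈ ℝ^n with Θu_j ≠ 0, and let T ∈ ℝ^{m×m} be the upper-triangular factor such that P(u₁,Θ)⋯P(u_m,Θ) = I_n − U T (ΘU)ᵀ Θ. Then T is invertible and satisfies (ΘU)ᵀ(ΘU) = T^{−1} + T^{−t}. -/

import Mathlib

open Matrix

/-- The randomized Householder reflector `P(z, Θ) = I - (2/‖Θz‖²) z (Θz)ᵀ Θ`. -/
noncomputable def rhouse {l n : ℕ} (Θ : Matrix (Fin l) (Fin n) ℝ) (z : Fin n → ℝ) :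
    Matrix (Fin n) (Fin n) ℝ :=
  1 - (2 / ((Θ.mulVec z) ⬝ᵥ (Θ.mulVec z))) • (Matrix.vecMulVec z (Θ.mulVec z) * Θ)

/-- The matrix `U_j = [u₁ | ⋯ | u_j]` whose columns are the (first `j`) Householder
vectors. -/
def Umat {n : ℕ} (u : ℕ → Fin n → ℝ) (j : ℕ) : Matrix (Fin n) (Fin j) ℝ :=
  Matrix.of fun i a => u a i

/-- The upper-triangular compact-form factor `T_j`, defined recursively by `T₁ = [β₁]`,
`T_{j+1} = [[T_j, -β_{j+1} T_j (ΘU_j)ᵀ Θu_{j+1}], [0, β_{j+1}]]`, with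
`β_j = 2/‖Θu_j‖²` (indices are zero-based here). -/
noncomputable def Tmat {l n : ℕ} (Θ : Matrix (Fin l) (Fin n) ℝ) (u : ℕ → Fin n → ℝ) :
    (j : ℕ) → Matrix (Fin j) (Fin j) ℝ
  | 0 => 0
  | j + 1 =>
    Matrix.reindex finSumFinEquiv finSumFinEquiv
      (Matrix.fromBlocks (Tmat Θ u j)
        (Matrix.of fun i (_ : Fin 1) =>
          ((-(2 / ((Θ.mulVec (u j)) ⬝ᵥ (Θ.mulVec (u j))))) •
              ((Tmat Θ u j).mulVec fun a : Fin j =>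
                (Θ.mulVec (u a)) ⬝ᵥ (Θ.mulVec (u j)))) i)
        0
        (Matrix.of fun _ _ => 2 / ((Θ.mulVec (u j)) ⬝ᵥ (Θ.mulVec (u j)))))

/-- Gram matrix of the first `m` transformed vectors. -/
noncomputable def Gmat {l n : ℕ} (Θ : Matrix (Fin l) (Fin n) ℝ) (u : ℕ → Fin n → ℝ) (m : ℕ) :
    Matrix (Fin m) (Fin m) ℝ :=
  Matrix.of fun a b => (Θ.mulVec (u a)) ⬝ᵥ (Θ.mulVec (u b))

lemma gram_eq {l n : ℕ} (Θ : Matrix (Fin l) (Fin n) ℝ) (u : ℕ → Fin n → ℝ) (m : ℕ) :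
    (Θ * Umat u m)ᵀ * (Θ * Umat u m) = Gmat Θ u m := by
  ext a b
  simp [Gmat, Matrix.mul_apply, dotProduct, Matrix.mulVec, Umat, Finset.mul_sum,
    Finset.sum_mul, mul_comm, mul_assoc, mul_left_comm]

lemma gram_succ {l n : ℕ} (Θ : Matrix (Fin l) (Fin n) ℝ) (u : ℕ → Fin n → ℝ) (j : ℕ) :
    Gmat Θ u (j + 1) =
      Matrix.reindex finSumFinEquiv finSumFinEquiv
        (Matrix.fromBlocks (Gmat Θ u j)
          (Matrix.of fun a (_ : Fin 1) => (Θ.mulVec (u a)) ⬝ᵥ (Θ.mulVec (u j)))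
          (Matrix.of fun (_ : Fin 1) b => (Θ.mulVec (u j)) ⬝ᵥ (Θ.mulVec (u b)))
          (Matrix.of fun _ _ => (Θ.mulVec (u j)) ⬝ᵥ (Θ.mulVec (u j)))) := by
  apply (Matrix.reindex finSumFinEquiv finSumFinEquiv).symm.injective
  rw [Equiv.symm_apply_apply]
  ext a b
  rcases a with a | a <;> rcases b with b | b <;>
    simp [Gmat, Matrix.reindex_symm, Matrix.reindex_apply, Fin.val_eq_zero,
      finSumFinEquiv_apply_left, finSumFinEquiv_apply_right]

lemma key {l n : ℕ} (Θ : Matrix (Fin l) (Fin n) ℝ) (u : ℕ → Fin n → ℝ) :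
    ∀ m : ℕ, (∀ j < m, Θ.mulVec (u j) ≠ 0) →
      IsUnit (Tmat Θ u m) ∧ Gmat Θ u m = (Tmat Θ u m)⁻¹ + ((Tmat Θ u m)⁻¹)ᵀ
  | 0, _ => ⟨isUnit_of_subsingleton _, Subsingleton.elim _ _⟩
  | j + 1, hu => by
    obtain ⟨hT, hG⟩ := key Θ u j (fun a ha => hu a (ha.trans (Nat.lt_succ_self j)))
    set d : ℝ := (Θ.mulVec (u j)) ⬝ᵥ (Θ.mulVec (u j)) with hd_def
    have hd : d ≠ 0 := by
      rw [hd_def, Ne, dotProduct_self_eq_zero]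
      exact hu j (Nat.lt_succ_self j)
    set T := Tmat Θ u j with hT_def
    set w : Fin j → ℝ := fun a => (Θ.mulVec (u a)) ⬝ᵥ (Θ.mulVec (u j)) with hw_def
    set S : Matrix (Fin (j + 1)) (Fin (j + 1)) ℝ :=
      Matrix.reindex finSumFinEquiv finSumFinEquiv
        (Matrix.fromBlocks T⁻¹ (Matrix.of fun a (_ : Fin 1) => w a) 0
          (Matrix.of fun _ _ => d / 2)) with hS_def
    have hTT : T * T⁻¹ = 1 := Matrix.mul_nonsing_inv T (Matrix.isUnit_iff_isUnit_det T |>.mp hT)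
    have hmul : Tmat Θ u (j + 1) * S = 1 := by
      rw [Tmat, hS_def, Matrix.reindex_apply, Matrix.reindex_apply,
        Matrix.submatrix_mul_equiv, ← hw_def, ← hd_def, ← hT_def,
        Matrix.fromBlocks_multiply, ← Matrix.submatrix_one_equiv finSumFinEquiv.symm,
        ← Matrix.fromBlocks_one]
      refine congrArg (fun M : Matrix (Fin j ⊕ Fin 1) (Fin j ⊕ Fin 1) ℝ =>
          M.submatrix ⇑finSumFinEquiv.symm ⇑finSumFinEquiv.symm)
        (Matrix.fromBlocks_inj.mpr ⟨by simpa using hTT, ?_, by simp, ?_⟩)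
      · ext a b
        simp [Matrix.mul_apply, Fin.sum_univ_one, Matrix.mulVec, dotProduct]
        field_simp
        ring
      · ext a b
        simp [Matrix.mul_apply, Fin.sum_univ_one, Matrix.one_apply, Subsingleton.elim a b]
        exact hd
    have hunit : IsUnit (Tmat Θ u (j + 1)) := by
      rw [Matrix.isUnit_iff_isUnit_det]
      exact IsUnit.of_mul_eq_one (S.det) (by rw [← Matrix.det_mul, hmul, Matrix.det_one])
    have hinv : (Tmat Θ u (j + 1))⁻¹ = S := Matrix.inv_eq_right_inv hmul
    refine ⟨hunit, ?_⟩
    rw [hinv, gram_succ, hS_def, Matrix.reindex_apply, Matrix.reindex_apply,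
      Matrix.transpose_submatrix, Matrix.fromBlocks_transpose]
    have hadd : ∀ A B : Matrix (Fin j ⊕ Fin 1) (Fin j ⊕ Fin 1) ℝ,
        A.submatrix finSumFinEquiv.symm finSumFinEquiv.symm +
          B.submatrix finSumFinEquiv.symm finSumFinEquiv.symm =
          (A + B).submatrix finSumFinEquiv.symm finSumFinEquiv.symm := fun A B => rfl
    rw [hadd, Matrix.fromBlocks_add]
    refine congrArg (fun M : Matrix (Fin j ⊕ Fin 1) (Fin j ⊕ Fin 1) ℝ =>
        M.submatrix ⇑finSumFinEquiv.symm ⇑finSumFinEquiv.symm)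
      (Matrix.fromBlocks_inj.mpr ⟨by simpa using hG, ?_, ?_, ?_⟩)
    · ext a b; simp [hw_def]
    · ext a b; simp [hw_def, dotProduct_comm]
    · ext a b; simp [hd_def]

/-- the compact-form factor `T` is invertible and satisfies
`(ΘU)ᵀ(ΘU) = T⁻¹ + T⁻ᵀ`. -/
theorem rhouse_T_woodbury {l n : ℕ} (m : ℕ) (Θ : Matrix (Fin l) (Fin n) ℝ)
    (u : ℕ → Fin n → ℝ) (hu : ∀ j < m, Θ.mulVec (u j) ≠ 0)
    (hcompact : ((List.finRange m).map fun j => rhouse Θ (u j)).prod =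
      1 - Umat u m * Tmat Θ u m * (Θ * Umat u m)ᵀ * Θ) :
    IsUnit (Tmat Θ u m) ∧
      (Θ * Umat u m)ᵀ * (Θ * Umat u m) = (Tmat Θ u m)⁻¹ + ((Tmat Θ u m)⁻¹)ᵀ := by

  obtain ⟨h1, h2⟩ := key Θ u m hu
  exact ⟨h1, (gram_eq Θ u m).trans h2⟩
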